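/- Suppose X = (X₀, X₁, …, X_k) with X_i ∈ R^{n_i} has joint density h(∑_{i=0}^k ‖x_i‖²) on R^N, N = n₀ + ⋯ + n_k. Define V = ‖X₀‖² and T_i = V^{-1/2} X_i, i = 1, …, k. Then (V, T₁, …, T_k) has joint density (π^{n₀/2}/Γ(n₀/2)) · h(v (1 + ∑_{i=1}^k ‖t_i‖²)) · v^{N/2 - 1} on (0,∞) × R^{n₁} × ⋯ × R^{n_k}. -/

import Mathlib

open MeasureTheory Real Set
open scoped ENNReal

lemma sq_image_Ioi : (fun r : ℝ => r ^ 2) '' Ioi 0 = Ioi 0 := by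
  ext x
  constructor
  · rintro ⟨r, hr, rfl⟩; exact pow_pos (show (0:ℝ) < r from hr) 2
  · intro hx; exact ⟨Real.sqrt x, Real.sqrt_pos.2 hx, Real.sq_sqrt hx.le⟩

lemma sq_injOn_Ioi : InjOn (fun r : ℝ => r ^ 2) (Ioi 0) :=
  (pow_left_strictMonoOn₀ two_ne_zero).injOn.mono (fun x hx => le_of_lt hx)

lemma lintegral_Ioi_comp_sq (g : ℝ → ℝ≥0∞) :
    ∫⁻ v in Ioi (0:ℝ), g v =
      ∫⁻ r in Ioi (0:ℝ), ENNReal.ofReal (2 * r) * g (r ^ 2) := by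
  have hder : ∀ x ∈ Ioi (0:ℝ), HasFDerivWithinAt (fun r : ℝ => r ^ 2)
      ((1 : ℝ →L[ℝ] ℝ).smulRight (2 * x)) (Ioi 0) x := by
    intro x _
    have := (hasDerivAt_pow 2 x).hasDerivWithinAt (s := Ioi 0)
    simpa [mul_comm, ContinuousLinearMap.smulRight_one_eq_toSpanSingleton] using this.hasFDerivWithinAt
  have := lintegral_image_eq_lintegral_abs_det_fderiv_mul volume measurableSet_Ioi
    hder sq_injOn_Ioi g
  rw [sq_image_Ioi] at this
  rw [this]
  refine setLIntegral_congr_fun measurableSet_Ioi (fun r hr => ?_)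
  rw [ContinuousLinearMap.smulRight_one_eq_toSpanSingleton, ContinuousLinearMap.det_toSpanSingleton, abs_of_nonneg (by have := hr.out; linarith : (0:ℝ) ≤ 2 * r)]

lemma polar_sq (n₀ : ℕ) (hn₀ : 0 < n₀) (f : ℝ → ℝ≥0∞) (hf : Measurable f) :
    ∫⁻ x : EuclideanSpace ℝ (Fin n₀), f (‖x‖ ^ 2) =
      ∫⁻ v in Ioi (0:ℝ),
        ENNReal.ofReal (π ^ ((n₀:ℝ)/2) / Real.Gamma ((n₀:ℝ)/2) * v ^ ((n₀:ℝ)/2 - 1)) * f v := by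
  haveI : Nonempty (Fin n₀) := Fin.pos_iff_nonempty.mp hn₀
  set E₀ := EuclideanSpace ℝ (Fin n₀)
  haveI : Nontrivial E₀ := by infer_instance
  have hd : Module.finrank ℝ E₀ = n₀ := finrank_euclideanSpace_fin
  -- step 1: restrict to nonzero elements
  have step1 : ∫⁻ x : E₀, f (‖x‖ ^ 2) =
      ∫⁻ x : ({0}ᶜ : Set E₀), f (‖(x : E₀)‖ ^ 2) ∂(Measure.comap Subtype.val volume) := by
    have h1 := lintegral_subtype_comap (μ := (volume : Measure E₀))
      (measurableSet_singleton (0:E₀)).compl (fun y : E₀ => f (‖y‖ ^ 2))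
    rw [h1, restrict_compl_singleton]
  -- step 2: polar decomposition
  have mp := (volume : Measure E₀).measurePreserving_homeomorphUnitSphereProd
  have hmeasg : Measurable (fun p : Metric.sphere (0:E₀) 1 × Ioi (0:ℝ) => f ((p.2 : ℝ) ^ 2)) :=
    hf.comp ((measurable_subtype_coe.comp measurable_snd).pow_const 2)
  have step2 : ∫⁻ x : ({0}ᶜ : Set E₀), f (‖(x : E₀)‖ ^ 2) ∂(Measure.comap Subtype.val volume) =
      ∫⁻ p : Metric.sphere (0:E₀) 1 × Ioi (0:ℝ), f ((p.2 : ℝ) ^ 2)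
        ∂((volume : Measure E₀).toSphere.prod (Measure.volumeIoiPow (Module.finrank ℝ E₀ - 1))) := by
    rw [← mp.map_eq, lintegral_map hmeasg (homeomorphUnitSphereProd E₀).measurable]
    simp
  -- step 3: integrate over the sphere
  have step3 : ∫⁻ p : Metric.sphere (0:E₀) 1 × Ioi (0:ℝ), f ((p.2 : ℝ) ^ 2)
        ∂((volume : Measure E₀).toSphere.prod (Measure.volumeIoiPow (Module.finrank ℝ E₀ - 1))) =
      (volume : Measure E₀).toSphere univ *
        ∫⁻ r : Ioi (0:ℝ), f ((r : ℝ) ^ 2) ∂(Measure.volumeIoiPow (Module.finrank ℝ E₀ - 1)) := by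
    rw [lintegral_prod _ hmeasg.aemeasurable]
    simp [lintegral_const, mul_comm]
  -- step 4: volumeIoiPow as a set integral
  have step4 : (∫⁻ r : Ioi (0:ℝ), f ((r : ℝ) ^ 2)
        ∂(Measure.volumeIoiPow (Module.finrank ℝ E₀ - 1))) =
      ∫⁻ r in Ioi (0:ℝ), ENNReal.ofReal (r ^ (n₀ - 1)) * f (r ^ 2) := by
    have w := lintegral_withDensity_eq_lintegral_mul
      (Measure.comap Subtype.val (volume : Measure ℝ))
      (f := fun r : Ioi (0:ℝ) => ENNReal.ofReal ((r:ℝ) ^ (Module.finrank ℝ E₀ - 1)))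
      ((measurable_subtype_coe.pow_const _).ennreal_ofReal)
      (g := fun r : Ioi (0:ℝ) => f ((r:ℝ) ^ 2))
      (hf.comp (measurable_subtype_coe.pow_const 2))
    rw [Measure.volumeIoiPow, w]
    have h2 := lintegral_subtype_comap (μ := (volume : Measure ℝ)) (s := Ioi (0:ℝ))
      measurableSet_Ioi
      (fun r : ℝ => ENNReal.ofReal (r ^ (Module.finrank ℝ E₀ - 1)) * f (r ^ 2))
    simp only [Pi.mul_apply]
    rw [h2, hd]
  -- step 5: total mass of the sphere measure
  have step5 : (volume : Measure E₀).toSphere univ =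
      (n₀ : ℝ≥0∞) * ENNReal.ofReal (Real.sqrt π ^ n₀ / Real.Gamma ((n₀:ℝ)/2 + 1)) := by
    rw [Measure.toSphere_apply_univ, hd]
    rw [show (Metric.ball (0:E₀) 1) = Metric.ball (0 : EuclideanSpace ℝ (Fin n₀)) 1 from rfl,
      EuclideanSpace.volume_ball, Fintype.card_fin]
    simp
  rw [step1, step2, step3, step4, step5, lintegral_Ioi_comp_sq
    (g := fun v => ENNReal.ofReal (π ^ ((n₀:ℝ)/2) / Real.Gamma ((n₀:ℝ)/2) *
      v ^ ((n₀:ℝ)/2 - 1)) * f v)]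
  rw [← lintegral_const_mul (μ := volume.restrict (Ioi 0))
    (r := (n₀ : ℝ≥0∞) * ENNReal.ofReal (Real.sqrt π ^ n₀ / Real.Gamma ((n₀:ℝ)/2 + 1)))
    (f := fun r : ℝ => ENNReal.ofReal (r ^ (n₀ - 1)) * f (r ^ 2))
    ((measurable_id'.pow_const _).ennreal_ofReal.mul
      (hf.comp (measurable_id'.pow_const 2)))]
  refine setLIntegral_congr_fun measurableSet_Ioi (fun r hr => ?_)
  have hr0 : (0:ℝ) < r := hr
  have hΓ : (0:ℝ) < Real.Gamma ((n₀:ℝ)/2) :=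
    Real.Gamma_pos_of_pos (by positivity)
  have hA : (0:ℝ) ≤ Real.sqrt π ^ n₀ / Real.Gamma ((n₀:ℝ)/2 + 1) := by
    have : (0:ℝ) < Real.Gamma ((n₀:ℝ)/2 + 1) := Real.Gamma_pos_of_pos (by positivity)
    positivity
  have key : (n₀:ℝ) * (Real.sqrt π ^ n₀ / Real.Gamma ((n₀:ℝ)/2 + 1)) * r ^ (n₀ - 1) =
      2 * r * (π ^ ((n₀:ℝ)/2) / Real.Gamma ((n₀:ℝ)/2) * (r ^ 2) ^ ((n₀:ℝ)/2 - 1)) := by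
    have e1 : Real.Gamma ((n₀:ℝ)/2 + 1) = ((n₀:ℝ)/2) * Real.Gamma ((n₀:ℝ)/2) := by
      rw [Real.Gamma_add_one (by positivity)]
    have e2 : Real.sqrt π ^ n₀ = π ^ ((n₀:ℝ)/2) := by
      rw [Real.sqrt_eq_rpow, ← Real.rpow_natCast (π ^ ((1:ℝ)/2)) n₀,
        ← Real.rpow_mul pi_pos.le]
      ring_nf
    have e3 : (r ^ 2 : ℝ) ^ ((n₀:ℝ)/2 - 1) = r ^ ((n₀:ℝ) - 2) := by
      rw [← Real.rpow_natCast r 2, ← Real.rpow_mul hr0.le]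
      norm_num
      ring_nf
    have e4 : (r : ℝ) ^ (n₀ - 1 : ℕ) = r ^ ((n₀:ℝ) - 1) := by
      rw [← Real.rpow_natCast r (n₀ - 1), Nat.cast_sub hn₀, Nat.cast_one]
    have e5 : r * r ^ ((n₀:ℝ) - 2) = r ^ ((n₀:ℝ) - 1) := by
      have h15 := Real.rpow_add hr0 1 ((n₀:ℝ) - 2)
      rw [Real.rpow_one] at h15
      rw [← h15]
      congr 1
      ring
    rw [e1, e2, e3, e4]
    have e6 : 2 * r * (π ^ ((n₀:ℝ)/2) / Real.Gamma ((n₀:ℝ)/2) * r ^ ((n₀:ℝ) - 2)) =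
        2 * (π ^ ((n₀:ℝ)/2) / Real.Gamma ((n₀:ℝ)/2)) * (r * r ^ ((n₀:ℝ) - 2)) := by ring
    rw [e6, e5]
    have hn₀' : (0:ℝ) < (n₀:ℝ) := by exact_mod_cast hn₀
    field_simp
  calc (n₀ : ℝ≥0∞) * ENNReal.ofReal (Real.sqrt π ^ n₀ / Real.Gamma ((n₀:ℝ)/2 + 1)) *
        (ENNReal.ofReal (r ^ (n₀ - 1)) * f (r ^ 2))
      = ENNReal.ofReal ((n₀:ℝ) * (Real.sqrt π ^ n₀ / Real.Gamma ((n₀:ℝ)/2 + 1)) *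
          r ^ (n₀ - 1)) * f (r ^ 2) := by
        rw [← ENNReal.ofReal_natCast, ← ENNReal.ofReal_mul (by positivity),
          ENNReal.ofReal_mul (mul_nonneg (Nat.cast_nonneg _) hA), mul_assoc]
    _ = ENNReal.ofReal (2 * r * (π ^ ((n₀:ℝ)/2) / Real.Gamma ((n₀:ℝ)/2) *
          (r ^ 2) ^ ((n₀:ℝ)/2 - 1))) * f (r ^ 2) := by rw [key]
    _ = ENNReal.ofReal (2 * r) * (ENNReal.ofReal (π ^ ((n₀:ℝ)/2) / Real.Gamma ((n₀:ℝ)/2) *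
          (r ^ 2) ^ ((n₀:ℝ)/2 - 1)) * f (r ^ 2)) := by
        rw [ENNReal.ofReal_mul (by positivity), mul_assoc]


lemma lintegral_comp_smul_pi {k : ℕ} (n : Fin k → ℕ)
    (f : (Π i, EuclideanSpace ℝ (Fin (n i))) → ℝ≥0∞) (hf : Measurable f) {r : ℝ} (hr : r ≠ 0) :
    ∫⁻ y, f y = ENNReal.ofReal |r ^ (∑ i, n i)| * ∫⁻ t, f (r • t) := by
  have hd : Module.finrank ℝ (Π i, EuclideanSpace ℝ (Fin (n i))) = ∑ i, n i := by
    simp [Module.finrank_pi_fintype]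
  have hm := Measure.map_addHaar_smul (volume : Measure (Π i, EuclideanSpace ℝ (Fin (n i)))) hr
  have h1 : ∫⁻ t, f (r • t) = ∫⁻ y, f y ∂(Measure.map (fun x => r • x) volume) :=
    (lintegral_map hf (measurable_const_smul r)).symm
  rw [h1, hm, lintegral_smul_measure, smul_eq_mul, hd, ← mul_assoc, ← ENNReal.ofReal_mul (abs_nonneg _),
    abs_inv, mul_inv_cancel₀ (abs_ne_zero.2 (pow_ne_zero _ hr)), ENNReal.ofReal_one, one_mul]


theorem generalised_gamma_pearson_VII_joint_density (k n₀ : ℕ) (hn₀ : 0 < n₀)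
    (n : Fin k → ℕ) (hn : ∀ i, 0 < n i) (h : ℝ → ℝ) (hmeas : Measurable h)
    (hnonneg : ∀ u, 0 ≤ h u)
    (hnorm : ∫ x : EuclideanSpace ℝ (Fin n₀) × Π i, EuclideanSpace ℝ (Fin (n i)),
        h (‖x.1‖ ^ 2 + ∑ i, ‖x.2 i‖ ^ 2) = 1) :
    Measure.map
      (fun x : EuclideanSpace ℝ (Fin n₀) × Π i, EuclideanSpace ℝ (Fin (n i)) =>
        ((‖x.1‖ ^ 2 : ℝ), fun i => ((‖x.1‖ ^ 2) ^ (-(1/2 : ℝ))) • x.2 i))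
      (volume.withDensity fun x => ENNReal.ofReal (h (‖x.1‖ ^ 2 + ∑ i, ‖x.2 i‖ ^ 2))) =
    volume.withDensity fun p : ℝ × Π i, EuclideanSpace ℝ (Fin (n i)) => ENNReal.ofReal
      (Set.indicator (Ioi (0 : ℝ))
        (fun v => Real.pi ^ ((n₀ : ℝ) / 2) / Real.Gamma ((n₀ : ℝ) / 2) *
          h (v * (1 + ∑ i, ‖p.2 i‖ ^ 2)) *
          v ^ (((n₀ : ℝ) + ∑ i, (n i : ℝ)) / 2 - 1)) p.1) := by
  classical
  haveI : Nonempty (Fin n₀) := Fin.pos_iff_nonempty.mp hn₀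
  have hΓpos : 0 < Real.Gamma ((n₀:ℝ)/2) := Real.Gamma_pos_of_pos (by positivity)
  have hc₀ : 0 ≤ π ^ ((n₀:ℝ)/2) / Real.Gamma ((n₀:ℝ)/2) :=
    div_nonneg (Real.rpow_nonneg pi_pos.le _) hΓpos.le
  set T : EuclideanSpace ℝ (Fin n₀) × (Π i, EuclideanSpace ℝ (Fin (n i))) →
      ℝ × (Π i, EuclideanSpace ℝ (Fin (n i))) :=
    fun x => ((‖x.1‖ ^ 2 : ℝ), fun i => ((‖x.1‖ ^ 2) ^ (-(1/2 : ℝ))) • x.2 i) with hTdef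
  have hT : Measurable T := by
    refine Measurable.prod ((continuous_fst.norm.pow 2).measurable) ?_
    refine measurable_pi_lambda _ fun i => Measurable.fun_smul ?_ ?_
    · exact ((continuous_fst.norm.pow 2).measurable).pow_const _
    · exact (measurable_pi_apply i).comp measurable_snd
  set dX : EuclideanSpace ℝ (Fin n₀) × (Π i, EuclideanSpace ℝ (Fin (n i))) → ℝ≥0∞ :=
    fun x => ENNReal.ofReal (h (‖x.1‖ ^ 2 + ∑ i, ‖x.2 i‖ ^ 2)) with hdXdef
  have hsum : Measurable fun t : Π i, EuclideanSpace ℝ (Fin (n i)) => ∑ i, ‖t i‖ ^ 2 :=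
    (continuous_finset_sum _ fun i _ => (continuous_apply i).norm.pow 2).measurable
  have hdX : Measurable dX := by
    apply Measurable.ennreal_ofReal
    exact hmeas.comp (((continuous_fst.norm.pow 2).measurable).add (hsum.comp measurable_snd))
  refine Measure.ext fun s hs => ?_
  rw [Measure.map_apply hT hs, withDensity_apply _ (hT hs), withDensity_apply _ hs]
  -- the slice function
  set Φ : ℝ → ℝ≥0∞ := fun v => ∫⁻ t : Π i, EuclideanSpace ℝ (Fin (n i)),
    s.indicator 1 (v, t) * ENNReal.ofReal (h (v * (1 + ∑ i, ‖t i‖ ^ 2))) with hΦdef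
  have hΦu : Measurable (fun p : ℝ × (Π i, EuclideanSpace ℝ (Fin (n i))) =>
      s.indicator 1 p * ENNReal.ofReal (h (p.1 * (1 + ∑ i, ‖p.2 i‖ ^ 2)))) := by
    refine Measurable.mul (measurable_const.indicator hs) ?_
    exact (hmeas.comp (measurable_fst.mul
      (measurable_const.add (hsum.comp measurable_snd)))).ennreal_ofReal
  have hΦ : Measurable Φ := Measurable.lintegral_prod_right hΦu
  -- LHS computation
  have lhs_eq : ∫⁻ x in T ⁻¹' s, dX x =
      ∫⁻ v in Ioi (0:ℝ),
        ENNReal.ofReal (π ^ ((n₀:ℝ)/2) / Real.Gamma ((n₀:ℝ)/2) * v ^ ((n₀:ℝ)/2 - 1)) *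
          (ENNReal.ofReal (v ^ (((∑ i, n i : ℕ) : ℝ) / 2)) * Φ v) := by
    set f₀ : ℝ → ℝ≥0∞ :=
      fun v => ENNReal.ofReal (v ^ (((∑ i, n i : ℕ) : ℝ) / 2)) * Φ v with hf₀def
    have hf₀ : Measurable f₀ := ((measurable_id'.pow_const _).ennreal_ofReal).mul hΦ
    have inner_eq : ∀ x₁ : EuclideanSpace ℝ (Fin n₀), x₁ ≠ 0 →
        (∫⁻ x₂ : Π i, EuclideanSpace ℝ (Fin (n i)), (T ⁻¹' s).indicator dX (x₁, x₂)) =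
          f₀ (‖x₁‖ ^ 2) := by
      intro x₁ hx₁
      have hr : (0:ℝ) < ‖x₁‖ := norm_pos_iff.mpr hx₁
      have hrne : ‖x₁‖ ≠ 0 := hr.ne'
      have hscalar : ((‖x₁‖ ^ 2 : ℝ)) ^ (-(1/2 : ℝ)) = ‖x₁‖⁻¹ := by
        rw [← Real.rpow_natCast ‖x₁‖ 2, ← Real.rpow_mul (norm_nonneg _)]
        rw [show ((2:ℕ):ℝ) * (-(1/2 : ℝ)) = (-1 : ℝ) by norm_num, Real.rpow_neg_one]
      have hg : Measurable fun y : Π i, EuclideanSpace ℝ (Fin (n i)) =>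
          (T ⁻¹' s).indicator dX (x₁, y) :=
        (hdX.indicator (hT hs)).comp
          (measurable_prodMk_left :
            Measurable fun y : Π i, EuclideanSpace ℝ (Fin (n i)) => (x₁, y))
      rw [lintegral_comp_smul_pi n _ hg hrne]
      have hTim : ∀ t : Π i, EuclideanSpace ℝ (Fin (n i)),
          T (x₁, ‖x₁‖ • t) = (‖x₁‖ ^ 2, t) := by
        intro t
        refine Prod.ext rfl ?_
        funext i
        show ((‖x₁‖ ^ 2 : ℝ)) ^ (-(1/2 : ℝ)) • (‖x₁‖ • t) i = t i
        rw [hscalar, Pi.smul_apply, smul_smul, inv_mul_cancel₀ hrne, one_smul]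
      have hpt : ∀ t : Π i, EuclideanSpace ℝ (Fin (n i)),
          (T ⁻¹' s).indicator dX (x₁, ‖x₁‖ • t) =
            s.indicator 1 (‖x₁‖ ^ 2, t) *
              ENNReal.ofReal (h (‖x₁‖ ^ 2 * (1 + ∑ i, ‖t i‖ ^ 2))) := by
        intro t
        have hdXval : dX (x₁, ‖x₁‖ • t) =
            ENNReal.ofReal (h (‖x₁‖ ^ 2 * (1 + ∑ i, ‖t i‖ ^ 2))) := by
          show ENNReal.ofReal (h (‖x₁‖ ^ 2 + ∑ i, ‖(‖x₁‖ • t) i‖ ^ 2)) = _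
          congr 2
          have : ∀ i, ‖(‖x₁‖ • t) i‖ ^ 2 = ‖x₁‖ ^ 2 * ‖t i‖ ^ 2 := by
            intro i
            rw [Pi.smul_apply, norm_smul, Real.norm_eq_abs, abs_of_nonneg (norm_nonneg _),
              mul_pow]
          rw [Finset.sum_congr rfl fun i _ => this i, ← Finset.mul_sum]
          ring
        by_cases hmem : (‖x₁‖ ^ 2, t) ∈ s
        · rw [indicator_of_mem (by rw [mem_preimage, hTim t]; exact hmem),
            indicator_of_mem hmem, Pi.one_apply, one_mul, hdXval]
        · rw [indicator_of_notMem (by rw [mem_preimage, hTim t]; exact hmem),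
            indicator_of_notMem hmem]
          simp
      rw [lintegral_congr hpt]
      have habs : ENNReal.ofReal |‖x₁‖ ^ (∑ i, n i)| =
          ENNReal.ofReal ((‖x₁‖ ^ 2) ^ (((∑ i, n i : ℕ) : ℝ) / 2)) := by
        congr 1
        rw [abs_of_nonneg (pow_nonneg (norm_nonneg _) _),
          ← Real.rpow_natCast ‖x₁‖ 2, ← Real.rpow_mul (norm_nonneg _),
          show ((2:ℕ):ℝ) * (((∑ i, n i : ℕ) : ℝ) / 2) = ((∑ i, n i : ℕ) : ℝ) by ring,
          Real.rpow_natCast]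
      rw [habs]
    have hmeas_in : Measurable fun x : EuclideanSpace ℝ (Fin n₀) ×
        (Π i, EuclideanSpace ℝ (Fin (n i))) => (T ⁻¹' s).indicator dX x :=
      hdX.indicator (hT hs)
    have ae0 : ∀ᵐ x₁ : EuclideanSpace ℝ (Fin n₀), x₁ ≠ 0 := by
      rw [ae_iff]
      simp only [not_not, setOf_eq_eq_singleton]
      exact measure_singleton 0
    calc (∫⁻ x in T ⁻¹' s, dX x) = ∫⁻ x, (T ⁻¹' s).indicator dX x :=
          (lintegral_indicator (hT hs) _).symm
      _ = ∫⁻ x₁, ∫⁻ x₂, (T ⁻¹' s).indicator dX (x₁, x₂) := by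
          rw [Measure.volume_eq_prod, lintegral_prod _ hmeas_in.aemeasurable]
      _ = ∫⁻ x₁, f₀ (‖x₁‖ ^ 2) :=
          lintegral_congr_ae (ae0.mono fun x₁ hx₁ => inner_eq x₁ hx₁)
      _ = _ := polar_sq n₀ hn₀ f₀ hf₀
  -- RHS computation
  have rhs_eq : (∫⁻ p in s, ENNReal.ofReal
      (Set.indicator (Ioi (0 : ℝ))
        (fun v => Real.pi ^ ((n₀ : ℝ) / 2) / Real.Gamma ((n₀ : ℝ) / 2) *
          h (v * (1 + ∑ i, ‖p.2 i‖ ^ 2)) *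
          v ^ (((n₀ : ℝ) + ∑ i, (n i : ℝ)) / 2 - 1)) p.1)) =
      ∫⁻ v in Ioi (0:ℝ),
        ENNReal.ofReal (π ^ ((n₀:ℝ)/2) / Real.Gamma ((n₀:ℝ)/2) *
          v ^ (((n₀ : ℝ) + ∑ i, (n i : ℝ)) / 2 - 1)) * Φ v := by
    set e : ℝ := ((n₀ : ℝ) + ∑ i, (n i : ℝ)) / 2 - 1 with he
    set c : ℝ := π ^ ((n₀:ℝ)/2) / Real.Gamma ((n₀:ℝ)/2) with hc
    set dens : ℝ × (Π i, EuclideanSpace ℝ (Fin (n i))) → ℝ≥0∞ :=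
      fun p => ENNReal.ofReal (Set.indicator (Ioi (0 : ℝ))
        (fun v => c * h (v * (1 + ∑ i, ‖p.2 i‖ ^ 2)) * v ^ e) p.1) with hdens
    have hdens_meas : Measurable dens := by
      have : dens = fun p => ENNReal.ofReal ((Ioi (0:ℝ)).indicator (fun _ => (1:ℝ)) p.1 *
          (c * h (p.1 * (1 + ∑ i, ‖p.2 i‖ ^ 2)) * p.1 ^ e)) := by
        funext p
        by_cases hp : p.1 ∈ Ioi (0:ℝ)
        · simp [hdens, indicator_of_mem hp]
        · simp [hdens, indicator_of_notMem hp]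
      rw [this]
      refine Measurable.ennreal_ofReal (Measurable.mul ?_ ?_)
      · exact ((measurable_const.indicator measurableSet_Ioi).comp measurable_fst)
      · refine measurable_const.mul ((hmeas.comp (measurable_fst.mul
          (measurable_const.add (hsum.comp measurable_snd)))) ) |>.mul
          ((measurable_fst).pow_const _)
    have key : ∀ v : ℝ, (∫⁻ t : Π i, EuclideanSpace ℝ (Fin (n i)),
        s.indicator dens (v, t)) =
        (Ioi (0:ℝ)).indicator (fun v => ENNReal.ofReal (c * v ^ e) * Φ v) v := by
      intro v
      by_cases hv : v ∈ Ioi (0:ℝ)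
      · rw [indicator_of_mem hv]
        have hΦv : Φ v = ∫⁻ t : Π i, EuclideanSpace ℝ (Fin (n i)),
            s.indicator 1 (v, t) * ENNReal.ofReal (h (v * (1 + ∑ i, ‖t i‖ ^ 2))) := rfl
        rw [hΦv, ← lintegral_const_mul _ (by
          exact Measurable.mul ((measurable_const.indicator hs).comp
            (measurable_prodMk_left :
              Measurable fun t : Π i, EuclideanSpace ℝ (Fin (n i)) => (v, t)))
            ((hmeas.comp (measurable_const.mul (measurable_const.add hsum))).ennreal_ofReal))]
        congr 1
        funext t
        by_cases hmem : (v, t) ∈ s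
        · simp only [hdens, indicator_of_mem hmem, indicator_of_mem hv, Pi.one_apply, one_mul]
          rw [← ENNReal.ofReal_mul (mul_nonneg hc₀ (Real.rpow_nonneg (le_of_lt hv) _))]
          congr 1
          ring
        · simp only [indicator_of_notMem hmem, Pi.one_apply, zero_mul, mul_zero]
      · rw [indicator_of_notMem hv]
        have : ∀ t : Π i, EuclideanSpace ℝ (Fin (n i)), s.indicator dens (v, t) = 0 := by
          intro t
          have hz : dens (v, t) = 0 := by simp [hdens, indicator_of_notMem hv]
          by_cases hmem : (v, t) ∈ s
          · rw [indicator_of_mem hmem, hz]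
          · rw [indicator_of_notMem hmem]
        simp [this]
    calc (∫⁻ p in s, dens p) = ∫⁻ p, s.indicator dens p := (lintegral_indicator hs _).symm
      _ = ∫⁻ v, ∫⁻ t, s.indicator dens (v, t) := by
          rw [Measure.volume_eq_prod, lintegral_prod _ (hdens_meas.indicator hs).aemeasurable]
      _ = ∫⁻ v, (Ioi (0:ℝ)).indicator (fun v => ENNReal.ofReal (c * v ^ e) * Φ v) v := by
          exact lintegral_congr key
      _ = ∫⁻ v in Ioi (0:ℝ), ENNReal.ofReal (c * v ^ e) * Φ v := by
          rw [lintegral_indicator measurableSet_Ioi _]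
  rw [lhs_eq, rhs_eq]
  refine setLIntegral_congr_fun measurableSet_Ioi (fun v hv => ?_)
  have hv0 : (0:ℝ) < v := hv
  rw [← mul_assoc, ← ENNReal.ofReal_mul (mul_nonneg hc₀ (Real.rpow_nonneg hv0.le _))]
  congr 2
  rw [mul_assoc, ← Real.rpow_add hv0]
  congr 2
  push_cast
  ring
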